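/- Let u solve A u = b and u^du solve A^H u^du = −l. Given approximations u_r of u and u_r^du of u^du, define the primal-dual corrected output s_r^{pd} = ⟨l, u_r⟩ − ⟨u_r^du, r(u_r)⟩ where r(u_r) = b − A u_r. Then |⟨l, u⟩ − s_r^{pd}| ≤ ‖r^du(u_r^du)‖_{U'} · ‖u − u_r‖_U, where r^du(u_r^du) = −l − A^H u_r^du and ‖·‖_{U'} is the dual norm induced by ⟨·, R_U^{-1}·⟩. -/

import Mathlib

open Matrix BigOperators

noncomputable section

/-- Inner product induced by `R`: `⟨x,y⟩_U = ⟨R x, y⟩`. -/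
def ipR {n : ℕ} (R : Matrix (Fin n) (Fin n) ℝ) (x y : Fin n → ℝ) : ℝ :=
  R.mulVec x ⬝ᵥ y

/-- Norm induced by `R`. -/
def normR {n : ℕ} (R : Matrix (Fin n) (Fin n) ℝ) (x : Fin n → ℝ) : ℝ :=
  Real.sqrt (ipR R x x)

/-- Euclidean norm. -/
def norm2 {m : ℕ} (v : Fin m → ℝ) : ℝ :=
  Real.sqrt (v ⬝ᵥ v)

/-- Dual norm `‖y‖_{U'}` induced by `⟨·, R⁻¹ ·⟩`. -/
def normDual {n : ℕ} (R : Matrix (Fin n) (Fin n) ℝ) (y : Fin n → ℝ) : ℝ :=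
  Real.sqrt (y ⬝ᵥ R⁻¹.mulVec y)

/-- Dual seminorm `‖y‖_{Z'} = sup_{w ∈ Z, w ≠ 0} |⟨y,w⟩|/‖w‖_U`. -/
def dualSemi {n : ℕ} (R : Matrix (Fin n) (Fin n) ℝ) (Z : Submodule ℝ (Fin n → ℝ))
    (y : Fin n → ℝ) : ℝ :=
  ⨆ w : Z, |y ⬝ᵥ (w : Fin n → ℝ)| / normR R (w : Fin n → ℝ)

/-- Sketched dual seminorm `‖y‖_{Z'}^Θ = sup_{w ∈ Z, w ≠ 0} |⟨Θ R⁻¹ y, Θ w⟩|/‖Θ w‖`. -/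
def skDualSemi {n k : ℕ} (R : Matrix (Fin n) (Fin n) ℝ) (Θ : Matrix (Fin k) (Fin n) ℝ)
    (Z : Submodule ℝ (Fin n → ℝ)) (y : Fin n → ℝ) : ℝ :=
  ⨆ w : Z, |(Θ.mulVec (R⁻¹.mulVec y)) ⬝ᵥ (Θ.mulVec (w : Fin n → ℝ))| /
      norm2 (Θ.mulVec (w : Fin n → ℝ))

/-- `i`-th column of a matrix as a vector. -/
def colV {n m : ℕ} (M : Matrix (Fin n) (Fin m) ℝ) (i : Fin m) : Fin n → ℝ :=
  fun j => M j i

/-- Squared Frobenius norm. -/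
def frob2 {a b : ℕ} (M : Matrix (Fin a) (Fin b) ℝ) : ℝ :=
  ∑ i, ∑ j, (M i j) ^ 2

/-- Cauchy–Schwarz for the dot product. -/
lemma abs_dot_le {n : ℕ} (x y : Fin n → ℝ) :
    |x ⬝ᵥ y| ≤ Real.sqrt (x ⬝ᵥ x) * Real.sqrt (y ⬝ᵥ y) := by
  have h := Finset.sum_mul_sq_le_sq_mul_sq Finset.univ x y
  have hx : x ⬝ᵥ x = ∑ i, x i ^ 2 := by simp [dotProduct, sq]
  have hy : y ⬝ᵥ y = ∑ i, y i ^ 2 := by simp [dotProduct, sq]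
  have hxy : (x ⬝ᵥ y) ^ 2 ≤ (x ⬝ᵥ x) * (y ⬝ᵥ y) := by
    rw [hx, hy]; simpa [dotProduct] using h
  have h1 : |x ⬝ᵥ y| = Real.sqrt ((x ⬝ᵥ y) ^ 2) := (Real.sqrt_sq_eq_abs _).symm
  rw [h1, ← Real.sqrt_mul (hx ▸ Finset.sum_nonneg fun i _ => sq_nonneg _)]
  exact Real.sqrt_le_sqrt hxy

/-- Error bound for the primal-dual corrected output quantity. -/
theorem primal_dual_correction {n : ℕ} (R A : Matrix (Fin n) (Fin n) ℝ)
    (hR : R.PosDef) (hA : IsUnit A.det)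
    (b l u udu urp urd : Fin n → ℝ)
    (hu : A.mulVec u = b) (hdu : Aᵀ.mulVec udu = -l) :
    |l ⬝ᵥ u - (l ⬝ᵥ urp - urd ⬝ᵥ (b - A.mulVec urp))| ≤
      normDual R (-l - Aᵀ.mulVec urd) * normR R (u - urp) := by
  classical
  set y : Fin n → ℝ := -l - Aᵀ.mulVec urd with hy
  set e : Fin n → ℝ := u - urp with he
  -- algebraic identity
  have key : l ⬝ᵥ u - (l ⬝ᵥ urp - urd ⬝ᵥ (b - A.mulVec urp)) = -(y ⬝ᵥ e) := by
    subst hu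
    have h1 : urd ⬝ᵥ (A.mulVec u - A.mulVec urp) = (Aᵀ.mulVec urd) ⬝ᵥ (u - urp) := by
      rw [← mulVec_sub, dotProduct_mulVec, ← mulVec_transpose]
    simp only [hy, he, sub_dotProduct, neg_dotProduct, dotProduct_sub, h1]
    ring
  rw [key, abs_neg]
  -- factor R = Bᵀ B with B invertible
  obtain ⟨B, hB⟩ : ∃ B : Matrix (Fin n) (Fin n) ℝ, R = Bᴴ * B := by
    open scoped MatrixOrder in exact CStarAlgebra.nonneg_iff_eq_star_mul_self.mp hR.posSemidef.nonneg
  have hBt : Bᴴ = Bᵀ := by ext i j; simp [Matrix.conjTranspose_apply]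
  rw [hBt] at hB
  have hdetB : IsUnit B.det := by
    have hdR : 0 < R.det := hR.det_pos
    rw [hB, Matrix.det_mul, Matrix.det_transpose] at hdR
    have : B.det ≠ 0 := fun h => by simp [h] at hdR
    exact isUnit_iff_ne_zero.mpr this
  have hBinv : B⁻¹ * B = 1 := Matrix.nonsing_inv_mul B hdetB
  -- rewrite the dot product
  have hed : e = B⁻¹.mulVec (B.mulVec e) := by
    rw [Matrix.mulVec_mulVec, hBinv, Matrix.one_mulVec]
  set c : Fin n → ℝ := B.mulVec e with hc
  set d : Fin n → ℝ := (Bᵀ)⁻¹.mulVec y with hd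
  have hdot : y ⬝ᵥ e = d ⬝ᵥ c := by
    conv_lhs => rw [hed]
    rw [Matrix.dotProduct_mulVec, ← Matrix.mulVec_transpose, Matrix.transpose_nonsing_inv]
  -- norms
  have hnormR : normR R e = Real.sqrt (c ⬝ᵥ c) := by
    unfold normR ipR
    congr 1
    rw [hB, ← Matrix.mulVec_mulVec, Matrix.mulVec_transpose, ← Matrix.dotProduct_mulVec]
  have hnormD : normDual R y = Real.sqrt (d ⬝ᵥ d) := by
    unfold normDual
    congr 1
    rw [hB, Matrix.mul_inv_rev, ← Matrix.mulVec_mulVec, Matrix.dotProduct_mulVec,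
      ← Matrix.mulVec_transpose, Matrix.transpose_nonsing_inv]
  rw [hdot, hnormR, hnormD]
  exact abs_dot_le d c
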